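/- In the bidirectional structural model under Assumption 1, suppose σ > 0, μxz ≠ 0, μyw ≠ 0, βxy·βyx ≠ 1 and βxy·βyx ≠ −1. Define c = 1/(1 − βxy·βyx), λ1 = σ²c²(1 + βyx²), λ2 = σ²c²(1 + βxy²), and the Probit coefficients ξxz = c·μxz/√λ1, ξxw = c·βyx·μyw/√λ1, ξyz = c·βxy·μxz/√λ2, ξyw = c·μyw/√λ2. Then the forward causal effect is identified by the formula βxy = (ξyz/ξxz)·√((ξxw²·ξxz² − ξyw²·ξxz²)/(ξyz²·ξyw² − ξyw²·ξxz²)). -/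

import Mathlib

/-- Proposition 1, forward direction: identification of the
forward causal effect in the bidirectional structural model under Assumption 1. -/
theorem stmt_5 (μx0 μy0 μxz μyw βxy βyx σ : ℝ)
    (hσ : 0 < σ) (hμxz : μxz ≠ 0) (hμyw : μyw ≠ 0)
    (h1 : βxy * βyx ≠ 1) (h2 : βxy * βyx ≠ -1)
    (c lam1 lam2 ξxz ξxw ξyz ξyw : ℝ)
    (hc : c = 1 / (1 - βxy * βyx))
    (hlam1 : lam1 = σ ^ 2 * c ^ 2 * (1 + βyx ^ 2))
    (hlam2 : lam2 = σ ^ 2 * c ^ 2 * (1 + βxy ^ 2))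
    (hξxz : ξxz = c * μxz / Real.sqrt lam1)
    (hξxw : ξxw = c * βyx * μyw / Real.sqrt lam1)
    (hξyz : ξyz = c * βxy * μxz / Real.sqrt lam2)
    (hξyw : ξyw = c * μyw / Real.sqrt lam2) :
    βxy = (ξyz / ξxz) * Real.sqrt ((ξxw ^ 2 * ξxz ^ 2 - ξyw ^ 2 * ξxz ^ 2) /
      (ξyz ^ 2 * ξyw ^ 2 - ξyw ^ 2 * ξxz ^ 2)) := by
  have hden : (1 : ℝ) - βxy * βyx ≠ 0 := by
    intro h; apply h1; linarith
  have hcne : c ≠ 0 := by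
    rw [hc]; exact one_div_ne_zero hden
  have hl1 : 0 < lam1 := by rw [hlam1]; positivity
  have hl2 : 0 < lam2 := by rw [hlam2]; positivity
  set s1 := Real.sqrt lam1 with hs1
  set s2 := Real.sqrt lam2 with hs2
  have hs1pos : 0 < s1 := Real.sqrt_pos.mpr hl1
  have hs2pos : 0 < s2 := Real.sqrt_pos.mpr hl2
  have hs1sq : s1 ^ 2 = lam1 := Real.sq_sqrt hl1.le
  have hs2sq : s2 ^ 2 = lam2 := Real.sq_sqrt hl2.le
  have hbb : βxy ^ 2 * βyx ^ 2 - 1 ≠ 0 := by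
    intro h
    have h' : (βxy * βyx - 1) * (βxy * βyx + 1) = 0 := by nlinarith [h]
    rcases mul_eq_zero.mp h' with h'' | h''
    · exact h1 (by linarith)
    · exact h2 (by linarith)
  have hxz2 : ξxz ^ 2 = c ^ 2 * μxz ^ 2 / lam1 := by
    rw [hξxz, div_pow, hs1sq]; ring_nf
  have hxw2 : ξxw ^ 2 = c ^ 2 * βyx ^ 2 * μyw ^ 2 / lam1 := by
    rw [hξxw, div_pow, hs1sq]; ring_nf
  have hyz2 : ξyz ^ 2 = c ^ 2 * βxy ^ 2 * μxz ^ 2 / lam2 := by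
    rw [hξyz, div_pow, hs2sq]; ring_nf
  have hyw2 : ξyw ^ 2 = c ^ 2 * μyw ^ 2 / lam2 := by
    rw [hξyw, div_pow, hs2sq]; ring_nf
  have hl1ne : lam1 ≠ 0 := hl1.ne'
  have hl2ne : lam2 ≠ 0 := hl2.ne'
  have hDenval : (ξyz ^ 2 * ξyw ^ 2 - ξyw ^ 2 * ξxz ^ 2) * (lam1 * lam2 ^ 2)
      = σ ^ 2 * c ^ 6 * μxz ^ 2 * μyw ^ 2 * (βxy ^ 2 * βyx ^ 2 - 1) := by
    rw [hyz2, hyw2, hxz2]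
    field_simp
    rw [hlam1, hlam2]
    ring
  have hDne : ξyz ^ 2 * ξyw ^ 2 - ξyw ^ 2 * ξxz ^ 2 ≠ 0 := by
    intro h
    rw [h, zero_mul] at hDenval
    have : σ ^ 2 * c ^ 6 * μxz ^ 2 * μyw ^ 2 ≠ 0 := by positivity
    exact hbb (by
      rcases mul_eq_zero.mp hDenval.symm with h' | h'
      · exact absurd h' this
      · exact h')
  have hkey : (ξxw ^ 2 * ξxz ^ 2 - ξyw ^ 2 * ξxz ^ 2) /
      (ξyz ^ 2 * ξyw ^ 2 - ξyw ^ 2 * ξxz ^ 2) = lam2 / lam1 := by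
    rw [div_eq_div_iff hDne hl1ne]
    rw [hxw2, hxz2, hyw2, hyz2]
    field_simp
    rw [hlam1, hlam2]
    ring
  rw [hkey, Real.sqrt_div hl2.le, ← hs1, ← hs2, hξyz, hξxz]
  field_simp
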